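/- Let Θ̂₀ be a symmetric real N×N matrix with vᵀ Θ̂₀ v ≥ λ₀ ‖v‖₂² for all v ∈ ℝ^N, where λ₀ > 0, let η₀ > 0 and σ ≥ 0. Let Θ̂ : [0,∞) → ℝ^{N×N} be continuous with ‖Θ̂(s) − Θ̂₀‖_op ≤ σ for all s ≥ 0. Let g^{lin}, g : [0,∞) → ℝ^N be differentiable with (g^{lin})′(t) = − η₀ Θ̂₀ g^{lin}(t), g′(t) = − η₀ Θ̂(t) g(t), and g^{lin}(0) = g(0). Then for every t ≥ 0, ‖g^{lin}(t) − g(t)‖₂ ≤ η₀ σ t · e^{(σ − λ₀) η₀ t} · ‖g(0)‖₂. -/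

import Mathlib

open Matrix

/-- The Euclidean (ℓ²) norm of a vector in `ℝ^n`. -/
noncomputable def l2norm {n : ℕ} (v : Fin n → ℝ) : ℝ :=
  Real.sqrt (∑ i, v i ^ 2)

/-- The ℓ²→ℓ² operator norm of a real matrix. -/
noncomputable def l2OpNorm {m n : ℕ} (A : Matrix (Fin m) (Fin n) ℝ) : ℝ :=
  ‖(Matrix.toEuclideanLin A).toContinuousLinearMap‖

open scoped RealInnerProductSpace

/-- Identity map into Euclidean space, as a continuous linear map. -/
noncomputable def toE {N : ℕ} : (Fin N → ℝ) →L[ℝ] EuclideanSpace ℝ (Fin N) :=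
  ((EuclideanSpace.equiv (Fin N) ℝ).symm : (Fin N → ℝ) ≃L[ℝ] EuclideanSpace ℝ (Fin N))

lemma l2norm_eq {N : ℕ} (v : Fin N → ℝ) : l2norm v = ‖toE v‖ := by
  rw [EuclideanSpace.norm_eq]
  simp only [l2norm, Real.norm_eq_abs, sq_abs]
  rfl

lemma inner_toE {N : ℕ} (u v : Fin N → ℝ) : ⟪toE u, toE v⟫ = u ⬝ᵥ v := by
  simp [toE, PiLp.inner_apply, RCLike.inner_apply, dotProduct]
  exact Finset.sum_congr rfl (fun i _ => mul_comm _ _)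

lemma toE_matrix {N : ℕ} (A : Matrix (Fin N) (Fin N) ℝ) (v : Fin N → ℝ) :
    Matrix.toEuclideanLin A (toE v) = toE (A.mulVec v) := by
  rfl

lemma opNorm_mulVec_bound {N : ℕ} (A : Matrix (Fin N) (Fin N) ℝ) (v : Fin N → ℝ) :
    ‖toE (A.mulVec v)‖ ≤ l2OpNorm A * ‖toE v‖ := by
  rw [← toE_matrix]
  unfold l2OpNorm
  exact (Matrix.toEuclideanLin A).toContinuousLinearMap.le_opNorm (toE v)

lemma hasDerivAt_toE {N : ℕ} {f : ℝ → (Fin N → ℝ)} {d : Fin N → ℝ} {t : ℝ}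
    (h : HasDerivAt f d t) : HasDerivAt (fun s => toE (f s)) (toE d) t :=
  toE.hasFDerivAt.comp_hasDerivAt t h

lemma le_of_forall_pos_le_add'' {a b : ℝ} (h : ∀ ε : ℝ, 0 < ε → a ≤ b + ε) : a ≤ b := by
  by_contra h'
  push_neg at h'
  have := h ((a - b) / 2) (by linarith)
  linarith

set_option maxHeartbeats 2000000 in
theorem residual_discrepancy_gronwall_bound {N : ℕ}
    (Θ₀ : Matrix (Fin N) (Fin N) ℝ) (hΘ₀sym : Θ₀.IsSymm)
    (lam₀ : ℝ) (hlam₀ : 0 < lam₀)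
    (hΘ₀lb : ∀ v : Fin N → ℝ, lam₀ * l2norm v ^ 2 ≤ v ⬝ᵥ Θ₀.mulVec v)
    (η₀ σ : ℝ) (hη₀ : 0 < η₀) (hσ : 0 ≤ σ)
    (Θ : ℝ → Matrix (Fin N) (Fin N) ℝ) (hΘcont : ContinuousOn Θ (Set.Ici 0))
    (hΘclose : ∀ s : ℝ, 0 ≤ s → l2OpNorm (Θ s - Θ₀) ≤ σ)
    (glin g : ℝ → (Fin N → ℝ))
    (hglin : ∀ t : ℝ, 0 ≤ t → HasDerivAt glin (-(η₀ • Θ₀.mulVec (glin t))) t)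
    (hgf : ∀ t : ℝ, 0 ≤ t → HasDerivAt g (-(η₀ • (Θ t).mulVec (g t))) t)
    (h0 : glin 0 = g 0) :
    ∀ t : ℝ, 0 ≤ t →
      l2norm (glin t - g t) ≤
        η₀ * σ * t * Real.exp ((σ - lam₀) * η₀ * t) * l2norm (g 0) := by
  intro T hT
  -- Cauchy–Schwarz plus operator norm bound for the perturbation
  have hCS : ∀ (x : ℝ), 0 ≤ x → ∀ (u : Fin N → ℝ),
      |⟪toE u, toE ((Θ x - Θ₀).mulVec (g x))⟫| ≤ σ * (‖toE u‖ * ‖toE (g x)‖) := by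
    intro x hx u
    have h1 := abs_real_inner_le_norm (toE u) (toE ((Θ x - Θ₀).mulVec (g x)))
    have h2 := opNorm_mulVec_bound (Θ x - Θ₀) (g x)
    have h3 := hΘclose x hx
    have h4 : (0:ℝ) ≤ ‖toE u‖ := norm_nonneg _
    have h5 : (0:ℝ) ≤ ‖toE (g x)‖ := norm_nonneg _
    have h6 : (0:ℝ) ≤ l2OpNorm (Θ x - Θ₀) := norm_nonneg _
    nlinarith [mul_le_mul_of_nonneg_left h2 h4,
      mul_le_mul_of_nonneg_right h3 (mul_nonneg h4 h5)]
  set G : ℝ → EuclideanSpace ℝ (Fin N) := fun s => toE (g s) with hGdef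
  set dG : ℝ → EuclideanSpace ℝ (Fin N) :=
    fun s => toE (-(η₀ • (Θ s).mulVec (g s))) with hdGdef
  have Gd : ∀ s : ℝ, 0 ≤ s → HasDerivAt G (dG s) s :=
    fun s hs => hasDerivAt_toE (hgf s hs)
  have ψd : ∀ s : ℝ, 0 ≤ s →
      HasDerivAt (fun u => ⟪G u, G u⟫) (⟪G s, dG s⟫ + ⟪dG s, G s⟫) s :=
    fun s hs => (Gd s hs).inner ℝ (Gd s hs)
  -- key differential inequality for ‖g‖²
  have keyA : ∀ s : ℝ, 0 ≤ s →
      ⟪G s, dG s⟫ + ⟪dG s, G s⟫ ≤ 2 * ((σ - lam₀) * η₀) * ⟪G s, G s⟫ := by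
    intro s hs
    have h1 : ⟪G s, dG s⟫ = -(η₀ * (g s ⬝ᵥ (Θ s).mulVec (g s))) := by
      rw [hGdef, hdGdef]
      simp only [inner_toE]
      simp [dotProduct_neg, dotProduct_smul, smul_eq_mul]
    have h2 : ⟪dG s, G s⟫ = ⟪G s, dG s⟫ := real_inner_comm _ _
    have hsplit : g s ⬝ᵥ (Θ s).mulVec (g s)
        = g s ⬝ᵥ Θ₀.mulVec (g s) + g s ⬝ᵥ ((Θ s - Θ₀).mulVec (g s)) := by
      conv_lhs => rw [show Θ s = Θ₀ + (Θ s - Θ₀) by rw [add_sub_cancel]]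
      rw [Matrix.add_mulVec, dotProduct_add]
    have hlow : lam₀ * ‖G s‖ ^ 2 ≤ g s ⬝ᵥ Θ₀.mulVec (g s) := by
      have := hΘ₀lb (g s)
      rwa [l2norm_eq] at this
    have hcross : -(σ * (‖G s‖ * ‖G s‖)) ≤ g s ⬝ᵥ ((Θ s - Θ₀).mulVec (g s)) := by
      have h := hCS s hs (g s)
      rw [inner_toE] at h
      have := neg_abs_le (g s ⬝ᵥ ((Θ s - Θ₀).mulVec (g s)))
      nlinarith
    have hGG : ⟪G s, G s⟫ = ‖G s‖ ^ 2 := real_inner_self_eq_norm_sq _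
    rw [h2, h1, hGG, hsplit]
    nlinarith [sq_nonneg (‖G s‖)]
  -- continuity of ‖g‖² on [0, T']
  have ψcont : ∀ T' : ℝ, ContinuousOn (fun u => ⟪G u, G u⟫) (Set.Icc 0 T') :=
    fun T' x hx => ((ψd x hx.1).continuousAt).continuousWithinAt
  -- Step A: norm bound on g
  have boundA : ∀ t : ℝ, 0 ≤ t → ‖G t‖ ≤ Real.exp ((σ - lam₀) * η₀ * t) * ‖G 0‖ := by
    intro t ht
    set K : ℝ := 2 * ((σ - lam₀) * η₀) with hK
    have main : ∀ ε : ℝ, 0 < ε →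
        ⟪G t, G t⟫ ≤ ‖G 0‖ ^ 2 * Real.exp (K * t) + ε * Real.exp ((K + 1) * t) := by
      intro ε hε
      have hB : ∀ x : ℝ, HasDerivAt
          (fun s => ‖G 0‖ ^ 2 * Real.exp (K * s) + ε * Real.exp ((K + 1) * s))
          (K * (‖G 0‖ ^ 2 * Real.exp (K * x)) + (K + 1) * (ε * Real.exp ((K + 1) * x))) x := by
        intro x
        have e1 : HasDerivAt (fun s : ℝ => Real.exp (K * s)) (Real.exp (K * x) * (K * 1)) x :=
          ((hasDerivAt_id x).const_mul K).exp
        have e2 : HasDerivAt (fun s : ℝ => Real.exp ((K + 1) * s))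
            (Real.exp ((K + 1) * x) * ((K + 1) * 1)) x :=
          ((hasDerivAt_id x).const_mul (K + 1)).exp
        refine ((e1.const_mul (‖G 0‖ ^ 2)).add (e2.const_mul ε)).congr_deriv ?_
        ring
      have hfence := image_le_of_deriv_right_lt_deriv_boundary
        (f := fun u => ⟪G u, G u⟫) (f' := fun x => ⟪G x, dG x⟫ + ⟪dG x, G x⟫)
        (a := 0) (b := t) (ψcont t)
        (fun x hx => (ψd x hx.1).hasDerivWithinAt)
        (B := fun s => ‖G 0‖ ^ 2 * Real.exp (K * s) + ε * Real.exp ((K + 1) * s))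
        (B' := fun x => K * (‖G 0‖ ^ 2 * Real.exp (K * x)) + (K + 1) * (ε * Real.exp ((K + 1) * x)))
        (by
          show ⟪G 0, G 0⟫ ≤ ‖G 0‖ ^ 2 * Real.exp (K * 0) + ε * Real.exp ((K + 1) * 0)
          simp only [mul_zero, Real.exp_zero, mul_one]
          rw [real_inner_self_eq_norm_sq]
          linarith)
        hB
        (by
          intro x hx heq
          have hb := keyA x hx.1
          have heq' : ⟪G x, G x⟫
              = ‖G 0‖ ^ 2 * Real.exp (K * x) + ε * Real.exp ((K + 1) * x) := heq
          rw [heq'] at hb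
          have hpos : 0 < ε * Real.exp ((K + 1) * x) := by positivity
          show ⟪G x, dG x⟫ + ⟪dG x, G x⟫
              < K * (‖G 0‖ ^ 2 * Real.exp (K * x)) + (K + 1) * (ε * Real.exp ((K + 1) * x))
          calc ⟪G x, dG x⟫ + ⟪dG x, G x⟫
              ≤ K * (‖G 0‖ ^ 2 * Real.exp (K * x) + ε * Real.exp ((K + 1) * x)) := hb
            _ = K * (‖G 0‖ ^ 2 * Real.exp (K * x)) + K * (ε * Real.exp ((K + 1) * x)) := by ring
            _ < K * (‖G 0‖ ^ 2 * Real.exp (K * x)) + (K + 1) * (ε * Real.exp ((K + 1) * x)) := by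
                nlinarith)
      exact hfence (Set.right_mem_Icc.2 ht)
    have h2 : ⟪G t, G t⟫ ≤ ‖G 0‖ ^ 2 * Real.exp (K * t) := by
      apply le_of_forall_pos_le_add''
      intro ε' hε'
      have h := main (ε' / Real.exp ((K + 1) * t)) (by positivity)
      rwa [div_mul_cancel₀ _ (Real.exp_pos _).ne'] at h
    have hexp : (Real.exp ((σ - lam₀) * η₀ * t)) ^ 2 = Real.exp (K * t) := by
      rw [sq, ← Real.exp_add, hK]
      ring_nf
    have h3 : ‖G t‖ ^ 2 ≤ (Real.exp ((σ - lam₀) * η₀ * t) * ‖G 0‖) ^ 2 := by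
      rw [← real_inner_self_eq_norm_sq, mul_pow, hexp]
      calc ⟪G t, G t⟫ ≤ ‖G 0‖ ^ 2 * Real.exp (K * t) := h2
        _ = Real.exp (K * t) * ‖G 0‖ ^ 2 := by ring
    exact le_of_pow_le_pow_left₀ two_ne_zero (by positivity) h3
  -- Step B: the discrepancy
  set a : ℝ := η₀ * lam₀ with ha
  set C : ℝ := η₀ * σ * Real.exp (η₀ * σ * T) * ‖G 0‖ with hC
  have hC0 : 0 ≤ C := by positivity
  have hvec : ∀ x : ℝ, (-(η₀ • Θ₀.mulVec (glin x))) - (-(η₀ • (Θ x).mulVec (g x)))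
      = -(η₀ • Θ₀.mulVec (glin x - g x)) + η₀ • ((Θ x - Θ₀).mulVec (g x)) := by
    intro x
    rw [Matrix.mulVec_sub, Matrix.sub_mulVec]
    module
  set D : ℝ → EuclideanSpace ℝ (Fin N) := fun s => toE (glin s) - toE (g s) with hDdef
  set dD : ℝ → EuclideanSpace ℝ (Fin N) :=
    fun s => toE (-(η₀ • Θ₀.mulVec (glin s - g s)) + η₀ • ((Θ s - Θ₀).mulVec (g s))) with hdDdef
  have Dd : ∀ s : ℝ, 0 ≤ s → HasDerivAt D (dD s) s := by
    intro s hs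
    have h := (hasDerivAt_toE (hglin s hs)).sub (hasDerivAt_toE (hgf s hs))
    rw [← map_sub, hvec s] at h
    exact h
  set w : ℝ → EuclideanSpace ℝ (Fin N) := fun s => Real.exp (a * s) • D s with hwdef
  set dw : ℝ → EuclideanSpace ℝ (Fin N) :=
    fun s => Real.exp (a * s) • dD s + (Real.exp (a * s) * a) • D s with hdwdef
  have wd : ∀ s : ℝ, 0 ≤ s → HasDerivAt w (dw s) s := by
    intro s hs
    have hc : HasDerivAt (fun u : ℝ => Real.exp (a * u)) (Real.exp (a * s) * (a * 1)) s :=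
      ((hasDerivAt_id s).const_mul a).exp
    have := hc.smul (Dd s hs)
    simp only [mul_one] at this
    exact this
  have φd : ∀ s : ℝ, 0 ≤ s →
      HasDerivAt (fun u => ⟪w u, w u⟫) (⟪w s, dw s⟫ + ⟪dw s, w s⟫) s :=
    fun s hs => (wd s hs).inner ℝ (wd s hs)
  -- key inequality for step B
  have keyB : ∀ x : ℝ, 0 ≤ x → x ≤ T →
      ⟪w x, dw x⟫ + ⟪dw x, w x⟫ ≤ 2 * C * ‖w x‖ := by
    intro x hx hxT
    have hcomm : ⟪dw x, w x⟫ = ⟪w x, dw x⟫ := real_inner_comm _ _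
    set e : ℝ := Real.exp (a * x) with he
    have he0 : 0 < e := Real.exp_pos _
    have hDD : D x = toE (glin x - g x) := (toE.map_sub _ _).symm
    -- inner products
    have hinner : ⟪w x, dw x⟫
        = e * (e * ⟪D x, dD x⟫) + e * ((e * a) * ⟪D x, D x⟫) := by
      rw [hwdef, hdwdef]
      simp only [inner_add_right, real_inner_smul_left, real_inner_smul_right]
      rw [he]
      ring
    have hdDx : dD x
        = -(η₀ • toE (Θ₀.mulVec (glin x - g x))) + η₀ • toE ((Θ x - Θ₀).mulVec (g x)) := by
      show toE _ = _
      rw [toE.map_add, toE.map_neg, toE.map_smul, toE.map_smul]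
    have hDdD : ⟪D x, dD x⟫
        = -(η₀ * ((glin x - g x) ⬝ᵥ Θ₀.mulVec (glin x - g x)))
          + η₀ * ⟪toE (glin x - g x), toE ((Θ x - Θ₀).mulVec (g x))⟫ := by
      rw [hDD, hdDx, inner_add_right, inner_neg_right, real_inner_smul_right,
        real_inner_smul_right, inner_toE]
    have hlow : lam₀ * ‖D x‖ ^ 2 ≤ (glin x - g x) ⬝ᵥ Θ₀.mulVec (glin x - g x) := by
      have := hΘ₀lb (glin x - g x)
      rwa [l2norm_eq, ← hDD] at this
    have hcrossbd : ⟪toE (glin x - g x), toE ((Θ x - Θ₀).mulVec (g x))⟫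
        ≤ σ * (‖D x‖ * ‖G x‖) := by
      have h := hCS x hx (glin x - g x)
      rw [← hDD] at h
      exact le_trans (le_abs_self _) h
    have hDD2 : ⟪D x, D x⟫ = ‖D x‖ ^ 2 := real_inner_self_eq_norm_sq _
    -- norm of g bound
    have hGb : ‖G x‖ ≤ Real.exp ((σ - lam₀) * η₀ * x) * ‖G 0‖ := boundA x hx
    have hwn : ‖w x‖ = e * ‖D x‖ := by
      rw [hwdef]
      simp [norm_smul, Real.norm_eq_abs, abs_of_pos he0, he]
    -- combine
    have hP : ⟪D x, dD x⟫ + η₀ * lam₀ * ‖D x‖ ^ 2 ≤ η₀ * σ * (‖D x‖ * ‖G x‖) := by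
      rw [hDdD]
      have hQ := mul_le_mul_of_nonneg_left hlow hη₀.le
      have hX := mul_le_mul_of_nonneg_left hcrossbd hη₀.le
      linarith
    have hstep : ⟪w x, dw x⟫ ≤ (e * ‖D x‖) * (η₀ * σ * (e * ‖G x‖)) := by
      rw [hinner, hDD2, ha]
      linarith [mul_le_mul_of_nonneg_left hP (mul_pos he0 he0).le]
    have hfactor : η₀ * σ * (e * ‖G x‖) ≤ C := by
      have h1 : e * ‖G x‖ ≤ e * (Real.exp ((σ - lam₀) * η₀ * x) * ‖G 0‖) := by
        have := mul_le_mul_of_nonneg_left hGb he0.le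
        linarith
      have h2 : e * (Real.exp ((σ - lam₀) * η₀ * x) * ‖G 0‖)
          = Real.exp (η₀ * σ * x) * ‖G 0‖ := by
        rw [he, ← mul_assoc, ← Real.exp_add]
        congr 2
        rw [ha]; ring
      have h3 : Real.exp (η₀ * σ * x) ≤ Real.exp (η₀ * σ * T) := by
        apply Real.exp_le_exp.2
        have hns : 0 ≤ η₀ * σ := by positivity
        exact mul_le_mul_of_nonneg_left hxT hns
      have h4 : (0:ℝ) ≤ ‖G 0‖ := norm_nonneg _
      calc η₀ * σ * (e * ‖G x‖)
          ≤ η₀ * σ * (Real.exp (η₀ * σ * x) * ‖G 0‖) :=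
            mul_le_mul_of_nonneg_left (h1.trans h2.le) (by positivity)
        _ ≤ η₀ * σ * (Real.exp (η₀ * σ * T) * ‖G 0‖) :=
            mul_le_mul_of_nonneg_left (mul_le_mul_of_nonneg_right h3 h4) (by positivity)
        _ = C := by rw [hC]; ring
    have hwn0 : 0 ≤ ‖w x‖ := norm_nonneg _
    have : ⟪w x, dw x⟫ ≤ C * ‖w x‖ := by
      rw [hwn]
      calc ⟪w x, dw x⟫ ≤ (e * ‖D x‖) * (η₀ * σ * (e * ‖G x‖)) := hstep
        _ ≤ (e * ‖D x‖) * C := by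
            apply mul_le_mul_of_nonneg_left hfactor
            positivity
        _ = C * (e * ‖D x‖) := by ring
    linarith [hcomm, this]
  -- fence for step B
  have mainB : ∀ ε : ℝ, 0 < ε → ⟪w T, w T⟫ ≤ (C * T + ε * (1 + T)) ^ 2 := by
    intro ε hε
    have hq : ∀ x : ℝ, HasDerivAt (fun s : ℝ => C * s + ε * (1 + s)) (C + ε) x := by
      intro x
      have h1 := (hasDerivAt_id x).const_mul C
      have h2 := ((hasDerivAt_id x).const_add 1).const_mul ε
      have := h1.add h2
      simp only [mul_one] at this
      exact this
    have hB : ∀ x : ℝ, HasDerivAt (fun s : ℝ => (C * s + ε * (1 + s)) ^ 2)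
        (2 * (C * x + ε * (1 + x)) * (C + ε)) x := by
      intro x
      have := (hq x).pow 2
      refine this.congr_deriv ?_
      ring
    have hfence := image_le_of_deriv_right_lt_deriv_boundary
      (f := fun u => ⟪w u, w u⟫) (f' := fun x => ⟪w x, dw x⟫ + ⟪dw x, w x⟫)
      (a := 0) (b := T)
      (fun x hx => ((φd x hx.1).continuousAt).continuousWithinAt)
      (fun x hx => (φd x hx.1).hasDerivWithinAt)
      (B := fun s : ℝ => (C * s + ε * (1 + s)) ^ 2)
      (B' := fun x : ℝ => 2 * (C * x + ε * (1 + x)) * (C + ε))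
      (by
        show ⟪w 0, w 0⟫ ≤ (C * 0 + ε * (1 + 0)) ^ 2
        have hw0 : w 0 = 0 := by
          rw [hwdef, hDdef]
          simp [h0]
        rw [hw0]
        simp only [inner_zero_right]
        positivity)
      hB
      (by
        intro x hx heq
        show ⟪w x, dw x⟫ + ⟪dw x, w x⟫ < 2 * (C * x + ε * (1 + x)) * (C + ε)
        have hx0 := hx.1
        have hq0 : 0 < C * x + ε * (1 + x) := by nlinarith [mul_nonneg hC0 hx0]
        have hwx : ‖w x‖ = C * x + ε * (1 + x) := by
          have h1 : ‖w x‖ ^ 2 = (C * x + ε * (1 + x)) ^ 2 := by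
            rw [← real_inner_self_eq_norm_sq]
            exact heq
          calc ‖w x‖ = Real.sqrt (‖w x‖ ^ 2) := (Real.sqrt_sq (norm_nonneg _)).symm
            _ = Real.sqrt ((C * x + ε * (1 + x)) ^ 2) := by rw [h1]
            _ = C * x + ε * (1 + x) := Real.sqrt_sq hq0.le
        calc ⟪w x, dw x⟫ + ⟪dw x, w x⟫ ≤ 2 * C * ‖w x‖ := keyB x hx.1 hx.2.le
          _ = 2 * (C * x + ε * (1 + x)) * C := by rw [hwx]; ring
          _ < 2 * (C * x + ε * (1 + x)) * (C + ε) := by nlinarith)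
    exact hfence (Set.right_mem_Icc.2 hT)
  have hwT : ‖w T‖ ≤ C * T := by
    apply le_of_forall_pos_le_add''
    intro ε' hε'
    have h1T : (0:ℝ) < 1 + T := by linarith
    have h := mainB (ε' / (1 + T)) (by positivity)
    rw [div_mul_cancel₀ _ h1T.ne'] at h
    have h2 : ‖w T‖ ^ 2 ≤ (C * T + ε') ^ 2 := by
      rw [← real_inner_self_eq_norm_sq]
      exact h
    exact le_of_pow_le_pow_left₀ two_ne_zero (by positivity) h2
  -- unwrap
  have hnormw : ‖w T‖ = Real.exp (a * T) * ‖D T‖ := by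
    rw [hwdef]
    simp [norm_smul, Real.norm_eq_abs, abs_of_pos (Real.exp_pos _)]
  have hfinal : Real.exp (a * T) * ‖D T‖ ≤ Real.exp (a * T) *
      (η₀ * σ * T * Real.exp ((σ - lam₀) * η₀ * T) * l2norm (g 0)) := by
    rw [← hnormw]
    have hrhs : Real.exp (a * T) * (η₀ * σ * T * Real.exp ((σ - lam₀) * η₀ * T) * l2norm (g 0))
        = C * T := by
      rw [hC, l2norm_eq]
      rw [show Real.exp (a * T) * (η₀ * σ * T * Real.exp ((σ - lam₀) * η₀ * T) * ‖toE (g 0)‖)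
          = (Real.exp (a * T) * Real.exp ((σ - lam₀) * η₀ * T)) * (η₀ * σ * T * ‖toE (g 0)‖)
          from by ring]
      rw [← Real.exp_add]
      rw [show a * T + (σ - lam₀) * η₀ * T = η₀ * σ * T from by rw [ha]; ring]
      rw [hGdef]
      ring
    rw [hrhs]
    exact hwT
  have hDTn : l2norm (glin T - g T) = ‖D T‖ := by
    rw [l2norm_eq, hDdef]
    simp [map_sub]
  rw [hDTn]
  exact le_of_mul_le_mul_left hfinal (Real.exp_pos _)
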